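/- Let G be a bipartite graph on {x_1,...,x_n} ∪ {y_1,...,y_n} satisfying conditions (a) and (b). Define L_G = { α ⊆ {p_1,...,p_n} : there exists a minimal vertex cover C of G such that p_k ∈ α ⇔ x_k ∈ C }. Then ∅ ∈ L_G and {p_1,...,p_n} ∈ L_G, and L_G is closed under union and intersection (i.e., L_G is a sublattice of the Boolean lattice on {p_1,...,p_n}). -/
import Mathlib


/-- `C` is a vertex cover of the subgraph of the bipartite graph with
edge relation `E` (edges `{x i, y j}` for `E i j`) induced on the vertices
`{x i, y i : i ∈ F}`. -/
def IsCoverOn (n : ℕ) (E : Fin n → Fin n → Prop) (F : Set (Fin n))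
    (C : Set (Fin n ⊕ Fin n)) : Prop :=
  (∀ v ∈ C, Sum.elim (· ∈ F) (· ∈ F) v) ∧
  (∀ i ∈ F, ∀ j ∈ F, E i j → Sum.inl i ∈ C ∨ Sum.inr j ∈ C)

/-- `C` is a minimal vertex cover of the induced subgraph on `F`. -/
def IsMinCoverOn (n : ℕ) (E : Fin n → Fin n → Prop) (F : Set (Fin n))
    (C : Set (Fin n ⊕ Fin n)) : Prop :=
  IsCoverOn n E F C ∧ ∀ D ⊂ C, ¬ IsCoverOn n E F D

/-- The vertex set `{x k : k ∈ α} ∪ {y k : k ∈ F \ α}` attached to `α ⊆ F`. -/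
def coverSetOn (n : ℕ) (F α : Set (Fin n)) : Set (Fin n ⊕ Fin n) :=
  (Sum.inl '' α) ∪ (Sum.inr '' (F \ α))

/-- The lattice `L_{G_F}` of the induced subgraph `G_F`: those `α ⊆ F` whose
associated vertex set is a minimal vertex cover of `G_F`. -/
def LGF (n : ℕ) (E : Fin n → Fin n → Prop) (F : Set (Fin n)) : Set (Set (Fin n)) :=
  {α | α ⊆ F ∧ IsMinCoverOn n E F (coverSetOn n F α)}

section Aux

variable {n : ℕ} {E : Fin n → Fin n → Prop}

/-- `α` is closed upwards under the edge relation. -/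
def Good (n : ℕ) (E : Fin n → Fin n → Prop) (α : Set (Fin n)) : Prop :=
  ∀ i j, E i j → j ∈ α → i ∈ α

lemma mem_coverSetOn_inl {α : Set (Fin n)} {k : Fin n} :
    Sum.inl k ∈ coverSetOn n Set.univ α ↔ k ∈ α := by
  simp [coverSetOn]

lemma mem_coverSetOn_inr {α : Set (Fin n)} {k : Fin n} :
    Sum.inr k ∈ coverSetOn n Set.univ α ↔ k ∉ α := by
  simp [coverSetOn]

lemma good_minCover (ha : ∀ i, E i i) {α : Set (Fin n)} (hG : Good n E α) :
    IsMinCoverOn n E Set.univ (coverSetOn n Set.univ α) := by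
  constructor
  · refine ⟨fun v _ => by cases v <;> simp, fun i _ j _ hij => ?_⟩
    by_cases hj : j ∈ α
    · exact Or.inl (mem_coverSetOn_inl.mpr (hG i j hij hj))
    · exact Or.inr (mem_coverSetOn_inr.mpr hj)
  · rintro D hD ⟨-, hcov⟩
    obtain ⟨v, hvC, hvD⟩ := Set.exists_of_ssubset hD
    rcases hcov (Sum.elim id id v) trivial (Sum.elim id id v) trivial
      (ha _) with h | h
    · cases v with
      | inl k => exact hvD h
      | inr k =>
        exact mem_coverSetOn_inr.mp hvC (mem_coverSetOn_inl.mp (hD.1 h))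
    · cases v with
      | inl k =>
        exact mem_coverSetOn_inr.mp (hD.1 h) (mem_coverSetOn_inl.mp hvC)
      | inr k => exact hvD h

lemma not_failing (ha : ∀ i, E i i)
    (hb : ∀ i j k : Fin n, i ≠ j → j ≠ k → i ≠ k → E i j → E j k → E i k)
    {C : Set (Fin n ⊕ Fin n)} (hC : IsMinCoverOn n E Set.univ C)
    {j : Fin n} (hl : Sum.inl j ∈ C) (hr : Sum.inr j ∈ C) : False := by
  obtain ⟨⟨-, hcov⟩, hmin⟩ := hC
  have h1 := hmin (C \ {Sum.inl j}) (Set.sdiff_singleton_ssubset.mpr hl)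
  have h2 := hmin (C \ {Sum.inr j}) (Set.sdiff_singleton_ssubset.mpr hr)
  simp only [IsCoverOn, not_and, not_forall] at h1 h2
  obtain ⟨a, -, k, -, hjk, hfail⟩ := h1 (fun v _ => by cases v <;> simp)
  obtain ⟨i, -, b, -, hij, hfail'⟩ := h2 (fun v _ => by cases v <;> simp)
  push_neg at hfail hfail'
  obtain ⟨hak, hbk⟩ := hfail
  obtain ⟨hai', hbj'⟩ := hfail'
  -- from h1: a must be j (since only inl j removed), and inr k ∉ C
  have ha1 : a = j := by
    by_contra hne
    rcases hcov a trivial k trivial hjk with h | h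
    · exact hak ⟨h, by simp [hne]⟩
    · exact hbk ⟨h, by simp⟩
  have hb2 : b = j := by
    by_contra hne
    rcases hcov i trivial b trivial hij with h | h
    · exact hai' ⟨h, by simp⟩
    · exact hbj' ⟨h, by simp [hne]⟩
  rw [ha1] at hjk hak
  rw [hb2] at hij hbj'
  have hkC : Sum.inr k ∉ C := fun h => hbk ⟨h, by simp⟩
  have hiC : Sum.inl i ∉ C := fun h => hai' ⟨h, by simp⟩
  have hkj : k ≠ j := fun h => hkC (h ▸ hr)
  have hij' : i ≠ j := fun h => hiC (h ▸ hl)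
  by_cases hik : i = k
  · subst hik
    rcases hcov i trivial i trivial (ha i) with h | h
    · exact hiC h
    · exact hkC h
  · rcases hcov i trivial k trivial (hb i j k hij' hkj.symm hik hij hjk) with h | h
    · exact hiC h
    · exact hkC h

lemma minCover_good (ha : ∀ i, E i i)
    (hb : ∀ i j k : Fin n, i ≠ j → j ≠ k → i ≠ k → E i j → E j k → E i k)
    {C : Set (Fin n ⊕ Fin n)} (hC : IsMinCoverOn n E Set.univ C) :
    Good n E {k | Sum.inl k ∈ C} := by
  intro i j hij hj
  rcases hC.1.2 i trivial j trivial hij with h | h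
  · exact h
  · exact absurd (not_failing ha hb hC hj h) not_false

end Aux

/-- Herzog–Hibi: `L_G = {α : ∃ minimal vertex cover C of G with p k ∈ α ↔ x k ∈ C}`
contains `∅` and `{p 1, ..., p n}` and is closed under union and
intersection, i.e. it is a sublattice of the Boolean lattice. -/
theorem stmt4 (n : ℕ) (E : Fin n → Fin n → Prop)
    (ha : ∀ i, E i i)
    (hb : ∀ i j k : Fin n, i ≠ j → j ≠ k → i ≠ k → E i j → E j k → E i k) :
    let LG : Set (Set (Fin n)) :=
      {α | ∃ C : Set (Fin n ⊕ Fin n), IsMinCoverOn n E Set.univ C ∧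
        ∀ k : Fin n, k ∈ α ↔ Sum.inl k ∈ C}
    (∅ : Set (Fin n)) ∈ LG ∧ (Set.univ : Set (Fin n)) ∈ LG ∧
    ∀ α ∈ LG, ∀ β ∈ LG, α ∪ β ∈ LG ∧ α ∩ β ∈ LG := by
  intro LG
  have key : ∀ α : Set (Fin n), Good n E α → α ∈ LG := fun α hG =>
    ⟨coverSetOn n Set.univ α, good_minCover ha hG,
      fun k => mem_coverSetOn_inl.symm⟩
  have key2 : ∀ α ∈ LG, Good n E α := by
    rintro α ⟨C, hC, hiff⟩
    intro i j hij hj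
    exact (hiff i).mpr (minCover_good ha hb hC i j hij ((hiff j).mp hj))
  refine ⟨key ∅ (fun i j _ hj => hj.elim), key Set.univ (fun _ _ _ _ => trivial), ?_⟩
  intro α hα β hβ
  have hgα := key2 α hα
  have hgβ := key2 β hβ
  constructor
  · exact key _ (fun i j hij hj => hj.elim (fun h => Or.inl (hgα i j hij h))
      (fun h => Or.inr (hgβ i j hij h)))
  · exact key _ (fun i j hij hj => ⟨hgα i j hij hj.1, hgβ i j hij hj.2⟩)
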